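/- For every integer m ≥ 0 and every real T > 1 with T ∉ {x n : n ∈ ℕ}, one has Σ_{n : x n < T} log^m(x n)/(x n) = A_m(T) + (log^m(T)/T)·Q(T) + B_m + ∫₁ᵀ (log^m(t) − m·log^{m−1}(t))/t² · Q(t) dt, where B_0 = −Q(1) and B_m = 0 for m ≥ 1, and where for m = 0 the integrand is interpreted as Q(t)/t². -/

import Mathlib

/-- The subtracted term `A_m(T) = (1/(2π(m+1)(m+2)))·log^{m+1}(T)·log(T^{m+1}/(2π)^{m+2})`. -/
noncomputable def ACoeff (m : ℕ) (T : ℝ) : ℝ :=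
  1 / (2 * Real.pi * (m + 1) * (m + 2)) * Real.log T ^ (m + 1) *
    Real.log (T ^ (m + 1) / (2 * Real.pi) ^ (m + 2))


open MeasureTheory intervalIntegral Set

lemma count_iff_lt (x : ℕ → ℝ) (hmono : Monotone x) (T : ℝ)
    (hfin : {n : ℕ | x n < T}.Finite) :
    ∀ n, x n < T ↔ n < Nat.card {n : ℕ // x n < T} := by
  have hcard : Nat.card {n : ℕ // x n < T} = hfin.toFinset.card := by
    rw [show { n // x n < T } = ((setOf fun n => x n < T : Set ℕ) : Type) from rfl, Nat.card_coe_set_eq]; exact Set.ncard_eq_toFinset_card _ hfin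
  intro n
  rw [hcard]
  constructor
  · intro hn
    have hsub : Finset.range (n + 1) ⊆ hfin.toFinset := by
      intro k hk
      simp only [Finset.mem_range] at hk
      simp only [Set.Finite.mem_toFinset, Set.mem_setOf_eq]
      exact lt_of_le_of_lt (hmono (Nat.lt_succ_iff.mp hk)) hn
    have := Finset.card_le_card hsub
    simpa using this
  · intro hn
    by_contra hnot
    have hsub : hfin.toFinset ⊆ Finset.range n := by
      intro k hk
      simp only [Set.Finite.mem_toFinset, Set.mem_setOf_eq] at hk
      simp only [Finset.mem_range]
      by_contra hk2
      exact hnot (lt_of_le_of_lt (hmono (Nat.le_of_not_lt hk2)) hk)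
    have := Finset.card_le_card hsub
    simp only [Finset.card_range] at this
    omega

lemma count_eq_sum (x : ℕ → ℝ) (t : ℝ) (K : ℕ)
    (h : ∀ n, x n < t ↔ (n < K ∧ x n < t)) :
    (Nat.card {n : ℕ // x n < t} : ℝ) =
      ∑ n ∈ Finset.range K, if x n < t then (1:ℝ) else 0 := by
  have hset : {n : ℕ | x n < t} = ↑((Finset.range K).filter (fun n => x n < t)) := by
    ext n
    simp only [Set.mem_setOf_eq, Finset.coe_filter, Finset.mem_range, Set.mem_setOf_eq]
    exact h n
  rw [show { n // x n < t } = ((setOf fun n => x n < t : Set ℕ) : Type) from rfl,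
    Nat.card_coe_set_eq, show (setOf fun n => x n < t).ncard = (((Finset.range K).filter (fun n => x n < t) : Finset ℕ) : Set ℕ).ncard from congrArg Set.ncard hset, Set.ncard_coe_finset]
  rw [Finset.sum_boole]

lemma hasDerivAt_f (m : ℕ) (t : ℝ) (ht : 0 < t) :
    HasDerivAt (fun s => Real.log s ^ m / s)
      (((m : ℝ) * Real.log t ^ (m - 1) - Real.log t ^ m) / t ^ 2) t := by
  have h1 := (Real.hasDerivAt_log ht.ne').pow m
  have h2 := hasDerivAt_inv ht.ne'
  have h3 := h1.mul h2
  have heq : (fun s => Real.log s ^ m / s) = fun s => Real.log s ^ m * s⁻¹ := by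
    funext s; rw [div_eq_mul_inv]
  rw [heq]
  refine HasDerivAt.congr_deriv h3 (Eq.symm ?_)
  simp only [Pi.pow_apply]
  field_simp
  ring

lemma hasDerivAt_L (t : ℝ) (ht : 0 < t) :
    HasDerivAt (fun s => 7 / 8 + s / (2 * Real.pi) * Real.log (s / (2 * Real.pi))
      - s / (2 * Real.pi)) (1 / (2 * Real.pi) * Real.log (t / (2 * Real.pi))) t := by
  have hpi : (0:ℝ) < Real.pi := Real.pi_pos
  have hne : t / (2 * Real.pi) ≠ 0 := by positivity
  have h1 : HasDerivAt (fun s : ℝ => s / (2 * Real.pi)) (1 / (2 * Real.pi)) t := by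
    simpa using (hasDerivAt_id t).div_const (2 * Real.pi)
  have h2 : HasDerivAt (fun s : ℝ => Real.log (s / (2 * Real.pi)))
      ((t / (2 * Real.pi))⁻¹ * (1 / (2 * Real.pi))) t :=
    by have := (Real.hasDerivAt_log hne).comp t h1; exact this
  have h3 := ((h1.mul h2).const_add (7/8 : ℝ)).sub h1
  refine HasDerivAt.congr_deriv h3 (Eq.symm ?_)
  rw [mul_comm]
  have : t / (2 * Real.pi) * ((t / (2 * Real.pi))⁻¹ * (1 / (2 * Real.pi))) = 1 / (2 * Real.pi) := by
    field_simp
  rw [this]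
  ring

lemma hasDerivAt_H (m : ℕ) (t : ℝ) (ht : 0 < t) :
    HasDerivAt (fun s => 1 / (2 * Real.pi) * (Real.log s ^ (m + 2) / (m + 2)
        - Real.log (2 * Real.pi) * (Real.log s ^ (m + 1) / (m + 1))))
      (1 / (2 * Real.pi) * Real.log (t / (2 * Real.pi)) * (Real.log t ^ m / t)) t := by
  have hpi : (0:ℝ) < Real.pi := Real.pi_pos
  have h1 := ((Real.hasDerivAt_log ht.ne').pow (m + 2)).div_const ((m : ℝ) + 2)
  have h2 := (((Real.hasDerivAt_log ht.ne').pow (m + 1)).div_const ((m : ℝ) + 1)).const_mul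
    (Real.log (2 * Real.pi))
  have h3 := (h1.sub h2).const_mul (1 / (2 * Real.pi))
  have hcast2 : ((m + 2 : ℕ) : ℝ) = (m : ℝ) + 2 := by push_cast; ring
  have hcast1 : ((m + 1 : ℕ) : ℝ) = (m : ℝ) + 1 := by push_cast; ring
  refine HasDerivAt.congr_deriv h3 (Eq.symm ?_)
  rw [Real.log_div ht.ne' (by positivity)]
  have e2 : m + 2 - 1 = m + 1 := rfl
  have e1 : m + 1 - 1 = m := rfl
  rw [e2, e1, hcast1, hcast2]
  have hm1 : (m : ℝ) + 1 ≠ 0 := by positivity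
  have hm2 : (m : ℝ) + 2 ≠ 0 := by positivity
  field_simp
  ring

set_option maxHeartbeats 1000000 in
/-- For a nondecreasing sequence `x` with `x 0 > 1` and `x n → ∞`, with counting
function `N`, `L(T) = 7/8 + (T/(2π)) log(T/(2π)) - T/(2π)` and `Q = N - L`: for every
`m ≥ 0` and `T > 1` not in the range of `x`,
`∑_{x n < T} log^m(x n)/(x n) = A_m(T) + (log^m T / T) Q(T) + B_m
  + ∫₁ᵀ (log^m t - m log^{m-1} t)/t² · Q(t) dt`,
where `B_0 = -Q(1)` and `B_m = 0` for `m ≥ 1`.  (For `m = 0` the integrand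
`log^0 t - 0·log^{0-1} t = 1` gives `Q(t)/t²` as required.) -/
theorem sum_log_pow_div_eq (x : ℕ → ℝ) (hmono : Monotone x) (hx0 : 1 < x 0)
    (hlim : Filter.Tendsto x Filter.atTop Filter.atTop)
    (N : ℝ → ℕ) (hN : ∀ T : ℝ, N T = Nat.card {n : ℕ // x n < T})
    (L : ℝ → ℝ)
    (hL : ∀ T : ℝ, L T = 7 / 8 + T / (2 * Real.pi) * Real.log (T / (2 * Real.pi))
      - T / (2 * Real.pi))
    (Q : ℝ → ℝ) (hQ : ∀ T : ℝ, Q T = (N T : ℝ) - L T)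
    (m : ℕ) (T : ℝ) (hT1 : 1 < T) (hTx : T ∉ Set.range x) :
    (∑' n : ℕ, if x n < T then Real.log (x n) ^ m / x n else 0) =
      ACoeff m T + Real.log T ^ m / T * Q T + (if m = 0 then -Q 1 else 0) +
        ∫ t in (1 : ℝ)..T,
          (Real.log t ^ m - m * Real.log t ^ (m - 1)) / t ^ 2 * Q t := by
  have hpi : (0:ℝ) < Real.pi := Real.pi_pos
  have hT0 : (0:ℝ) < T := lt_trans one_pos hT1
  set f : ℝ → ℝ := fun t => Real.log t ^ m / t with hfdef
  set g : ℝ → ℝ := fun t => ((m : ℝ) * Real.log t ^ (m - 1) - Real.log t ^ m) / t ^ 2 with hgdef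
  have hfg : ∀ t : ℝ, 0 < t → HasDerivAt f (g t) t := fun t ht => hasDerivAt_f m t ht
  have hxn : ∀ n, 1 < x n := fun n => lt_of_lt_of_le hx0 (hmono (Nat.zero_le n))
  -- finiteness of the counting set
  have hfin : {n : ℕ | x n < T}.Finite := by
    obtain ⟨M, hM⟩ := (hlim.eventually (Filter.eventually_ge_atTop T)).exists_forall_of_atTop
    apply Set.Finite.subset (Set.finite_Iio M)
    intro n hn
    simp only [Set.mem_setOf_eq] at hn
    simp only [Set.mem_Iio]
    by_contra h
    exact absurd hn (not_lt.mpr (hM n (Nat.le_of_not_lt h)))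
  set K := N T with hK
  have hiff : ∀ n, x n < T ↔ n < K := by
    intro n; rw [hK, hN T]; exact count_iff_lt x hmono T hfin n
  -- tsum reduces to a finite sum
  have htsum : (∑' n : ℕ, if x n < T then Real.log (x n) ^ m / x n else 0)
      = ∑ n ∈ Finset.range K, f (x n) := by
    rw [tsum_eq_sum (s := Finset.range K)
      (fun n hn => if_neg (fun h => hn (Finset.mem_range.mpr ((hiff n).mp h))))]
    exact Finset.sum_congr rfl fun n hn => if_pos ((hiff n).mpr (Finset.mem_range.mp hn))
  -- continuity/integrability of g on [1,T]
  have huIcc : Set.uIcc (1:ℝ) T = Set.Icc 1 T := Set.uIcc_of_le hT1.le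
  have hlogc : ContinuousOn Real.log (Set.Icc (1:ℝ) T) :=
    Real.continuousOn_log.mono (fun t ht => by
      simp only [Set.mem_compl_iff, Set.mem_singleton_iff]
      intro h
      rw [h] at ht
      exact absurd ht.1 (by norm_num))
  have hgc : ContinuousOn g (Set.uIcc 1 T) := by
    rw [huIcc]
    exact ((continuousOn_const.mul (hlogc.pow _)).sub (hlogc.pow _)).div
      ((continuous_pow 2).continuousOn)
      (fun t ht => pow_ne_zero 2 (ne_of_gt (lt_of_lt_of_le one_pos ht.1)))
  have hgint : IntervalIntegrable g volume 1 T := hgc.intervalIntegrable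
  -- indicator functions
  have heqind : ∀ n t, (if x n < t then (1:ℝ) else 0) * g t
      = g t - ({s : ℝ | s ≤ x n}.indicator g) t := by
    intro n t
    by_cases h : x n < t
    · rw [if_pos h, Set.indicator_of_notMem (by simpa using not_le.mpr h)]; ring
    · rw [if_neg h, Set.indicator_of_mem (by simpa using not_lt.mp h)]; ring
  have hind : ∀ n, IntervalIntegrable ({s : ℝ | s ≤ x n}.indicator g) volume 1 T := by
    intro n
    exact ⟨hgint.1.indicator measurableSet_Iic, hgint.2.indicator measurableSet_Iic⟩
  have hgind : ∀ n, IntervalIntegrable (fun t => (if x n < t then (1:ℝ) else 0) * g t)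
      volume 1 T := by
    intro n
    have : (fun t => (if x n < t then (1:ℝ) else 0) * g t)
        = fun t => g t - ({s : ℝ | s ≤ x n}.indicator g) t := funext (heqind n)
    rw [this]
    exact hgint.sub (hind n)
  -- per-term Abel identity
  have hterm : ∀ n ∈ Finset.range K,
      f (x n) = f T - ∫ t in (1:ℝ)..T, (if x n < t then (1:ℝ) else 0) * g t := by
    intro n hn
    have hnT : x n < T := (hiff n).mpr (Finset.mem_range.mp hn)
    have hx1 : 1 < x n := hxn n
    have hmem : x n ∈ Set.Icc (1:ℝ) T := ⟨hx1.le, hnT.le⟩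
    have hsub1 : Set.uIcc (1:ℝ) (x n) ⊆ Set.uIcc (1:ℝ) T := by
      rw [huIcc, Set.uIcc_of_le hx1.le]; exact Set.Icc_subset_Icc le_rfl hnT.le
    have hsub2 : Set.uIcc (x n) T ⊆ Set.uIcc (1:ℝ) T := by
      rw [huIcc, Set.uIcc_of_le hnT.le]; exact Set.Icc_subset_Icc hx1.le le_rfl
    have hftc : ∫ t in (x n)..T, g t = f T - f (x n) := by
      apply intervalIntegral.integral_eq_sub_of_hasDerivAt
      · intro t ht
        rw [Set.uIcc_of_le hnT.le] at ht
        exact hfg t (by linarith [ht.1, hx1])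
      · exact hgint.mono_set hsub2
    have hcongr : ∫ t in (1:ℝ)..T, (if x n < t then (1:ℝ) else 0) * g t
        = (∫ t in (1:ℝ)..T, g t) - ∫ t in (1:ℝ)..T, ({s : ℝ | s ≤ x n}.indicator g) t := by
      rw [intervalIntegral.integral_congr (g := fun t => g t - ({s : ℝ | s ≤ x n}.indicator g) t)
        (fun t _ => heqind n t)]
      exact intervalIntegral.integral_sub hgint (hind n)
    rw [hcongr, intervalIntegral.integral_indicator hmem]
    have hadj : (∫ t in (1:ℝ)..(x n), g t) + ∫ t in (x n)..T, g t = ∫ t in (1:ℝ)..T, g t :=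
      intervalIntegral.integral_add_adjacent_intervals (hgint.mono_set hsub1)
        (hgint.mono_set hsub2)
    have := hftc
    linarith [hadj, hftc]
  -- interchange sum and integral
  have hNt : ∀ t ∈ Set.Icc (1:ℝ) T,
      (N t : ℝ) = ∑ n ∈ Finset.range K, if x n < t then (1:ℝ) else 0 := by
    intro t ht
    rw [hN t]
    apply count_eq_sum
    intro n
    exact ⟨fun h => ⟨(hiff n).mp (lt_of_lt_of_le h ht.2), h⟩, fun h => h.2⟩
  have hsum : ∑ n ∈ Finset.range K, f (x n)
      = K * f T - ∫ t in (1:ℝ)..T, (N t : ℝ) * g t := by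
    rw [Finset.sum_congr rfl hterm, Finset.sum_sub_distrib, Finset.sum_const,
      Finset.card_range, nsmul_eq_mul]
    congr 1
    rw [← intervalIntegral.integral_finset_sum (fun n _ => hgind n)]
    apply intervalIntegral.integral_congr
    intro t ht
    rw [huIcc] at ht
    show (∑ n ∈ Finset.range K, (if x n < t then (1:ℝ) else 0) * g t) = (N t : ℝ) * g t
    rw [hNt t ht, Finset.sum_mul]
  -- integrability of the pieces
  have hLfun : L = fun t => 7 / 8 + t / (2 * Real.pi) * Real.log (t / (2 * Real.pi))
      - t / (2 * Real.pi) := funext hL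
  have hLc : ContinuousOn L (Set.uIcc 1 T) := by
    rw [hLfun, huIcc]
    have hc1 : ContinuousOn (fun t : ℝ => t / (2 * Real.pi)) (Set.Icc 1 T) :=
      (continuous_id.div_const _).continuousOn
    have hc2 : ContinuousOn (fun t : ℝ => Real.log (t / (2 * Real.pi))) (Set.Icc 1 T) := by
      apply Real.continuousOn_log.comp hc1
      intro t ht
      simp only [Set.mem_compl_iff, Set.mem_singleton_iff]
      have h1 : (1:ℝ) ≤ t := ht.1
      have : 0 < t / (2 * Real.pi) := by positivity
      exact ne_of_gt this
    exact (continuousOn_const.add (hc1.mul hc2)).sub hc1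
  have hLgint : IntervalIntegrable (fun t => L t * g t) volume 1 T :=
    (hLc.mul hgc).intervalIntegrable
  have hQgint : IntervalIntegrable (fun t => Q t * g t) volume 1 T := by
    have hS : IntervalIntegrable
        (fun t => (∑ n ∈ Finset.range K, if x n < t then (1:ℝ) else 0) * g t) volume 1 T := by
      exact (IntervalIntegrable.sum _ fun n (_ : n ∈ Finset.range K) => hgind n).congr_ae
        (Filter.Eventually.of_forall fun t => by
          rw [Finset.sum_apply]; rw [← Finset.sum_mul])
    apply (hS.sub hLgint).congr_ae
    apply (ae_restrict_iff' measurableSet_uIoc).mpr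
    apply Filter.Eventually.of_forall
    intro t ht
    rw [Set.uIoc_of_le hT1.le] at ht
    show (∑ n ∈ Finset.range K, if x n < t then (1:ℝ) else 0) * g t - L t * g t = Q t * g t
    rw [hQ t, ← hNt t ⟨ht.1.le, ht.2⟩]
    ring
  -- split the integral
  have hNsplit : ∫ t in (1:ℝ)..T, (N t : ℝ) * g t
      = (∫ t in (1:ℝ)..T, L t * g t) + ∫ t in (1:ℝ)..T, Q t * g t := by
    rw [← intervalIntegral.integral_add hLgint hQgint]
    apply intervalIntegral.integral_congr
    intro t _
    show (N t : ℝ) * g t = L t * g t + Q t * g t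
    rw [hQ t]
    ring
  -- integration by parts for the L-part
  have hfc : ContinuousOn f (Set.uIcc 1 T) := by
    rw [huIcc]
    exact (hlogc.pow _).div continuousOn_id
      (fun t ht => ne_of_gt (lt_of_lt_of_le one_pos ht.1))
  have hL'c : ContinuousOn (fun t : ℝ => 1 / (2 * Real.pi) * Real.log (t / (2 * Real.pi)))
      (Set.uIcc 1 T) := by
    rw [huIcc]
    apply continuousOn_const.mul
    apply Real.continuousOn_log.comp (continuous_id.div_const _).continuousOn
    intro t ht
    simp only [Set.mem_compl_iff, Set.mem_singleton_iff]
    have h1 : (1:ℝ) ≤ t := ht.1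
    have : 0 < t / (2 * Real.pi) := by positivity
    exact ne_of_gt this
  have hibp : ∫ t in (1:ℝ)..T, L t * g t
      = L T * f T - L 1 * f 1
        - ∫ t in (1:ℝ)..T, (1 / (2 * Real.pi) * Real.log (t / (2 * Real.pi))) * f t := by
    apply intervalIntegral.integral_mul_deriv_eq_deriv_mul_of_hasDerivAt hLc hfc
    · intro t ht
      rw [min_eq_left hT1.le, max_eq_right hT1.le] at ht
      rw [hLfun]
      exact hasDerivAt_L t (lt_trans one_pos ht.1)
    · intro t ht
      rw [min_eq_left hT1.le, max_eq_right hT1.le] at ht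
      exact hfg t (lt_trans one_pos ht.1)
    · exact hL'c.intervalIntegrable
    · exact hgint
  -- evaluate ∫ L' f via explicit antiderivative
  have hmain_int : ∫ t in (1:ℝ)..T, (1 / (2 * Real.pi) * Real.log (t / (2 * Real.pi))) * f t
      = ACoeff m T := by
    have hftc2 : ∫ t in (1:ℝ)..T, (1 / (2 * Real.pi) * Real.log (t / (2 * Real.pi))) * f t
        = (1 / (2 * Real.pi) * (Real.log T ^ (m + 2) / (m + 2)
            - Real.log (2 * Real.pi) * (Real.log T ^ (m + 1) / (m + 1))))
          - (1 / (2 * Real.pi) * (Real.log 1 ^ (m + 2) / (m + 2)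
            - Real.log (2 * Real.pi) * (Real.log 1 ^ (m + 1) / (m + 1)))) := by
      apply intervalIntegral.integral_eq_sub_of_hasDerivAt
      · intro t ht
        rw [huIcc] at ht
        exact hasDerivAt_H m t (lt_of_lt_of_le one_pos ht.1)
      · exact (hL'c.mul hfc).intervalIntegrable
    rw [hftc2]
    simp only [Real.log_one]
    rw [zero_pow (by omega), zero_pow (by omega)]
    unfold ACoeff
    rw [Real.log_div (pow_ne_zero _ hT0.ne') (pow_ne_zero _ (by positivity)),
      Real.log_pow, Real.log_pow]
    have hm1 : (m : ℝ) + 1 ≠ 0 := by positivity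
    have hm2 : (m : ℝ) + 2 ≠ 0 := by positivity
    push_cast
    field_simp
    ring
  -- endpoint values
  have hf1 : f 1 = if m = 0 then (1:ℝ) else 0 := by
    simp only [hfdef]
    rw [Real.log_one]
    rcases Nat.eq_zero_or_pos m with h | h
    · rw [if_pos h, h]; norm_num
    · rw [if_neg (Nat.pos_iff_ne_zero.mp h), zero_pow (Nat.pos_iff_ne_zero.mp h)]; norm_num
  have hN1 : (N 1 : ℝ) = 0 := by
    rw [hN 1]
    norm_cast
    rw [Nat.card_eq_zero]
    left
    constructor
    intro ⟨n, hn⟩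
    exact absurd hn (not_lt.mpr (hxn n).le)
  have hQ1 : L 1 = -Q 1 := by rw [hQ 1, hN1]; ring
  -- final integrand identification
  have hfinal_int : ∫ t in (1:ℝ)..T,
      (Real.log t ^ m - m * Real.log t ^ (m - 1)) / t ^ 2 * Q t
      = - ∫ t in (1:ℝ)..T, Q t * g t := by
    rw [← intervalIntegral.integral_neg]
    apply intervalIntegral.integral_congr
    intro t _
    simp only [hgdef]
    ring
  -- put everything together
  rw [htsum, hsum, hNsplit, hibp, hmain_int, hfinal_int]
  rw [hQ T, hf1]
  rcases Nat.eq_zero_or_pos m with h | h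
  · rw [if_pos h, if_pos h, hQ 1, hN1]
    simp only [hfdef, ← hK]
    ring
  · rw [if_neg (Nat.pos_iff_ne_zero.mp h), if_neg (Nat.pos_iff_ne_zero.mp h)]
    simp only [hfdef, ← hK]
    ring
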